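/- Let 0 ≤ λ₀ < λ₁ ≤ ∞, I = (λ₀, λ₁), and let A ⊆ ℕ^ℕ be measurable and rapidly determined over I, with k-tautologically determined approximating events A_k = {ω : (ω₁,…,ω_k) ∈ B_k} (B_k ⊆ ℕ^k) satisfying P_λ(A Δ A_k) ≤ C e^{−ck} for all k ≥ k₀. For each k let g_k : ℂ → ℂ be the entire function g_k(z) = Σ over (m₁,…,m_k) in the set defining A_k \ A_{k−1} of ∏_{i=1}^k e^{−z} z^{m_i}/m_i!, which agrees with P_λ(A_k \ A_{k−1}) for real λ > 0. Then for every λ ∈ I there exist δ > 0 and constants c₁, c₂ > 0 such that for all sufficiently large k and all z ∈ ℂ with |z − λ| ≤ δ, one has |g_k(z)| ≤ c₁ e^{−c₂ k}. -/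

import Mathlib

open MeasureTheory ProbabilityTheory Filter Topology

open scoped ENNReal NNReal

/-- `P` is the family of laws of a sequence of i.i.d. Poisson(λ) random variables:
for each `λ > 0`, `P λ` is a probability measure on `ℕ → ℕ` whose finite-dimensional
marginals are finite products of Poisson(λ) distributions.  This characterizes the
countable product of Poisson(λ) measures on `ℕ^ℕ`. -/
def IsPoissonSeedFamily (P : ℝ → Measure (ℕ → ℕ)) : Prop :=
  ∀ lam : ℝ, 0 < lam → IsProbabilityMeasure (P lam) ∧
    ∀ k : ℕ, (P lam).map (fun ω (j : Fin k) => ω j.1)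
      = Measure.pi (fun _ : Fin k => poissonMeasure lam.toNNReal)

/-- The first `k` coordinates `(ω₁, …, ω_k)` of a seed `ω ∈ ℕ^ℕ` (0-indexed). -/
def restrictSeed (k : ℕ) (ω : ℕ → ℕ) : Fin k → ℕ := fun j => ω j.1

/-- An event is `k`-tautologically determined if it is of the form
`{ω : (ω₁, …, ω_k) ∈ B}` for some `B ⊆ ℕ^k`. -/
def TautDetermined (k : ℕ) (A : Set (ℕ → ℕ)) : Prop :=
  ∃ B : Set (Fin k → ℕ), A = {ω | restrictSeed k ω ∈ B}

lemma tsum_pi_prod (k : ℕ) (f : ℕ → ℝ≥0∞) :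
    ∑' m : Fin k → ℕ, ∏ i : Fin k, f (m i) = (∑' n, f n) ^ k := by
  induction k with
  | zero =>
      simp [tsum_eq_single (fun (i : Fin 0) => 0)
        (fun b hb => absurd (Subsingleton.elim b _) hb)]
  | succ k ih =>
      rw [← (Fin.consEquiv (fun _ : Fin (k+1) => ℕ)).tsum_eq (fun m => ∏ i, f (m i))]
      have h : ∀ p : ℕ × (Fin k → ℕ),
          (∏ i : Fin (k+1), f (((Fin.consEquiv (fun _ : Fin (k+1) => ℕ)) p) i))
            = f p.1 * ∏ i : Fin k, f (p.2 i) := by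
        intro p
        rw [Fin.prod_univ_succ]
        rfl
      simp_rw [h]
      rw [ENNReal.tsum_prod' (f := fun p : ℕ × (Fin k → ℕ) => f p.1 * ∏ i : Fin k, f (p.2 i))]
      simp_rw [ENNReal.tsum_mul_left]
      rw [ENNReal.tsum_mul_right, ih, pow_succ]
      ring

lemma poissonMeasure_singleton (r : ℝ≥0) (n : ℕ) :
    poissonMeasure r {n} = ENNReal.ofReal (poissonPMFReal r n) := by
  exact ProbabilityTheory.poissonMeasure_singleton r n

lemma cyl_measure (k : ℕ) (μ : Measure (ℕ → ℕ)) (r : ℝ≥0)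
    (hμ : μ.map (fun ω (j : Fin k) => ω j.1)
      = Measure.pi (fun _ : Fin k => poissonMeasure r))
    (S : Set (Fin k → ℕ)) :
    μ {ω | restrictSeed k ω ∈ S}
      = ∑' m : (Fin k → ℕ), S.indicator
          (fun m => ∏ i : Fin k, ENNReal.ofReal (poissonPMFReal r (m i))) m := by
  have hmeas : Measurable (fun ω (j : Fin k) => ω j.1 : (ℕ → ℕ) → Fin k → ℕ) :=
    measurable_pi_lambda _ (fun j => measurable_pi_apply j.1)
  have hS : MeasurableSet S := (Set.to_countable S).measurableSet
  have h1 : μ {ω | restrictSeed k ω ∈ S}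
      = Measure.pi (fun _ : Fin k => poissonMeasure r) S := by
    rw [← hμ, Measure.map_apply hmeas hS]
    rfl
  have h2 := tsum_measure_preimage_singleton
    (μ := Measure.pi (fun _ : Fin k => poissonMeasure r)) (Set.to_countable S)
    (f := id) (fun y _ => (Set.to_countable _).measurableSet)
  simp only [Set.preimage_id] at h2
  rw [h1, ← h2, ← tsum_subtype]
  apply tsum_congr
  intro m
  rw [← Set.univ_pi_singleton m.1, Measure.pi_pi]
  exact Finset.prod_congr rfl (fun i _ => _root_.poissonMeasure_singleton r (m.1 i))

lemma tsum_cs {α : Type*} [MeasurableSpace α] [Countable α] [MeasurableSingletonClass α]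
    (p q : α → ℝ≥0∞) :
    ∑' a, (p a) ^ (1/2 : ℝ) * (q a) ^ (1/2 : ℝ)
      ≤ (∑' a, p a) ^ (1/2 : ℝ) * (∑' a, q a) ^ (1/2 : ℝ) := by
  have hpq : Real.HolderConjugate 2 2 := Real.holderConjugate_iff.mpr ⟨by norm_num, by norm_num⟩
  have h := ENNReal.lintegral_mul_le_Lp_mul_Lq (Measure.count : Measure α) hpq
    (measurable_of_countable (fun a => (p a) ^ (1/2 : ℝ))).aemeasurable
    (measurable_of_countable (fun a => (q a) ^ (1/2 : ℝ))).aemeasurable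
  simp only [Pi.mul_apply] at h
  rw [lintegral_count] at h
  have h2 : ∀ x : ℝ≥0∞, (x ^ (1/2 : ℝ)) ^ (2 : ℝ) = x := by
    intro x
    rw [← ENNReal.rpow_mul]
    norm_num
  simp only [h2] at h
  rw [lintegral_count, lintegral_count] at h
  simpa using h

lemma ofReal_abs_tsum {ι : Type*} (f : ι → ℂ) :
    ENNReal.ofReal ‖∑' i, f i‖
      ≤ ∑' i, ENNReal.ofReal ‖f i‖ := by
  by_cases hs : Summable f
  · have habs : Summable (fun i => ‖f i‖) := by
      rwa [summable_norm_iff]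
    calc ENNReal.ofReal ‖∑' i, f i‖
        ≤ ENNReal.ofReal (∑' i, ‖f i‖) := by
          apply ENNReal.ofReal_le_ofReal
          simpa using norm_tsum_le_tsum_norm habs
      _ = ∑' i, ENNReal.ofReal ‖f i‖ := by
          apply ENNReal.ofReal_tsum_of_nonneg (fun i => (norm_nonneg _))
          simpa using habs
  · rw [tsum_eq_zero_of_not_summable hs]
    simp

lemma coord_id {lam x r : ℝ} (hlam : 0 < lam) (hr : 0 ≤ r) (n : ℕ) :
    Real.exp (-x) * r ^ n / (n.factorial : ℝ)
      = Real.exp ((lam + r^2/lam)/2 - x)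
        * (Real.sqrt (poissonPMFReal lam.toNNReal n)
          * Real.sqrt (poissonPMFReal (r^2/lam).toNNReal n)) := by
  have hs : (0:ℝ) ≤ r^2/lam := by positivity
  have hcl : ((lam.toNNReal : ℝ)) = lam := Real.coe_toNNReal _ hlam.le
  have hcs : (((r^2/lam).toNNReal : ℝ)) = r^2/lam := Real.coe_toNNReal _ hs
  set s := r^2/lam with hsdef
  have hls : lam * s = r^2 := by
    rw [hsdef]; field_simp
  have hfac : (0:ℝ) < (n.factorial : ℝ) := by positivity
  have hC : (0:ℝ) ≤ Real.exp (-(lam+s)/2) * r ^ n / (n.factorial : ℝ) := by positivity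
  have key : poissonPMFReal lam.toNNReal n * poissonPMFReal (r^2/lam).toNNReal n
      = (Real.exp (-(lam+s)/2) * r ^ n / (n.factorial : ℝ))^2 := by
    unfold poissonPMFReal
    rw [hcl, hcs]
    have h1 : Real.exp (-(lam+s)/2) ^ 2 = Real.exp (-lam) * Real.exp (-s) := by
      rw [sq, ← Real.exp_add, ← Real.exp_add]
      ring_nf
    have h2 : lam ^ n * s ^ n = (r ^ n) ^ 2 := by
      rw [← mul_pow, hls, ← pow_mul, ← pow_mul]
      ring_nf
    calc Real.exp (-lam) * lam ^ n / (n.factorial : ℝ)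
          * (Real.exp (-s) * s ^ n / (n.factorial : ℝ))
        = (Real.exp (-(lam+s)/2) ^ 2) * (lam ^ n * s ^ n)
            / ((n.factorial : ℝ) * (n.factorial : ℝ)) := by rw [h1]; ring
      _ = (Real.exp (-(lam+s)/2) * r ^ n / (n.factorial : ℝ))^2 := by rw [h2]; ring
  have hE : Real.exp ((lam+s)/2 - x) * Real.exp (-(lam+s)/2) = Real.exp (-x) := by
    rw [← Real.exp_add]; ring_nf
  rw [← Real.sqrt_mul poissonPMFReal_nonneg, key, Real.sqrt_sq hC]
  calc Real.exp (-x) * r ^ n / (n.factorial : ℝ)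
      = (Real.exp ((lam+s)/2 - x) * Real.exp (-(lam+s)/2)) * r ^ n / (n.factorial : ℝ) := by
        rw [hE]
    _ = Real.exp ((lam+s)/2 - x) * (Real.exp (-(lam+s)/2) * r ^ n / (n.factorial : ℝ)) := by
        ring

lemma pmf_tsum_one (r : ℝ≥0) :
    ∑' n : ℕ, ENNReal.ofReal (poissonPMFReal r n) = 1 := by
  rw [← ENNReal.ofReal_tsum_of_nonneg (fun n => poissonPMFReal_nonneg)
    (poissonPMFRealSum r).summable, HasSum.tsum_eq (f := fun n => poissonPMFReal r n) (poissonPMFRealSum r)]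
  simp

/-- For a rapidly determined event `A` with approximating events `A_k = {ω : (ω₁,…,ω_k) ∈ B_k}`,
the entire functions `g_k` extending `λ ↦ P_λ(A_k \ A_{k-1})` satisfy, for every `λ ∈ I`,
a uniform bound `|g_k(z)| ≤ c₁ e^{-c₂ k}` on a disc `|z - λ| ≤ δ` for large `k`. -/
theorem uniform_disc_bound_for_differences
    (P : ℝ → Measure (ℕ → ℕ)) (hP : IsPoissonSeedFamily P)
    (lam0 lam1 : EReal) (h0 : 0 ≤ lam0) (h01 : lam0 < lam1)
    (A : Set (ℕ → ℕ)) (hA : MeasurableSet A)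
    (B : (k : ℕ) → Set (Fin k → ℕ))
    (hrap : ∀ lam : ℝ, lam0 < (lam : EReal) → (lam : EReal) < lam1 →
      ∃ C > (0 : ℝ), ∃ c > (0 : ℝ), ∃ k₀ : ℕ, ∀ k ≥ k₀,
        P lam (symmDiff A {ω | restrictSeed k ω ∈ B k})
          ≤ ENNReal.ofReal (C * Real.exp (-c * k)))
    (g : ℕ → ℂ → ℂ)
    (hg : ∀ k : ℕ, ∀ z : ℂ, g k z =
      ∑' m : {m : Fin k → ℕ // m ∈ B k ∧
          (fun j : Fin (k - 1) => m (Fin.castLE (Nat.sub_le k 1) j)) ∉ B (k - 1)},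
        ∏ i : Fin k, Complex.exp (-z) * z ^ (m.1 i) / ((m.1 i).factorial : ℂ)) :
    ∀ lam : ℝ, lam0 < (lam : EReal) → (lam : EReal) < lam1 →
      ∃ δ > (0 : ℝ), ∃ c₁ > (0 : ℝ), ∃ c₂ > (0 : ℝ), ∃ K : ℕ, ∀ k ≥ K,
        ∀ z : ℂ, ‖z - (lam : ℂ)‖ ≤ δ →
          ‖g k z‖ ≤ c₁ * Real.exp (-c₂ * k) := by
  intro lam hl0 hl1
  have hlam : (0:ℝ) < lam := by
    have h := h0.trans_lt hl0
    exact_mod_cast h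
  obtain ⟨C, hC, c, hc, k₀, hb⟩ := hrap lam hl0 hl1
  have hδpos : (0:ℝ) < min lam (c/24) := lt_min hlam (by positivity)
  have hc₁ : (0:ℝ) < Real.sqrt (2*C*Real.exp c) := Real.sqrt_pos.mpr (by positivity)
  refine ⟨min lam (c/24), hδpos, Real.sqrt (2*C*Real.exp c), hc₁, 3*c/8, by positivity,
    k₀ + 1, ?_⟩
  intro k hk z hz
  set δ := min lam (c/24) with hδdef
  have hδl : δ ≤ lam := min_le_left _ _
  have hδc : δ ≤ c/24 := min_le_right _ _
  set x := z.re with hxdef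
  set r := ‖z‖ with hrdef
  have hr0 : (0:ℝ) ≤ r := norm_nonneg z
  set β := (lam + r^2/lam)/2 - x with hβdef
  -- geometric bounds
  have hx : lam - δ ≤ x := by
    have h1 : |(z - (lam:ℂ)).re| ≤ δ :=
      le_trans (Complex.abs_re_le_norm _) hz
    have h2 : (z - (lam:ℂ)).re = x - lam := by
      simp [Complex.sub_re, hxdef]
    rw [h2, abs_le] at h1
    linarith [h1.1]
  have hrle : r ≤ lam + δ := by
    have h1 : ‖z‖ - ‖(lam:ℂ)‖ ≤ ‖z - (lam:ℂ)‖ := norm_sub_norm_le _ _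
    have h2 : ‖(lam:ℂ)‖ = lam := by
      simp [Complex.norm_real, abs_of_pos hlam]
    have h3 : ‖z - (lam:ℂ)‖ ≤ δ := hz
    have h4 : ‖z‖ = r := rfl
    linarith
  have hβ : β ≤ c/8 := by
    have hr2 : r^2 ≤ (lam+δ)^2 := by nlinarith
    have hs3 : r^2/lam ≤ lam + 3*δ := by
      rw [div_le_iff₀ hlam]
      nlinarith
    rw [hβdef]
    linarith
  -- the determining set
  set S : Set (Fin k → ℕ) := {m | m ∈ B k ∧
      (fun j : Fin (k - 1) => m (Fin.castLE (Nat.sub_le k 1) j)) ∉ B (k - 1)} with hSdef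
  -- measure bound
  have hincl : {ω | restrictSeed k ω ∈ S}
      ⊆ symmDiff A {ω | restrictSeed k ω ∈ B k}
        ∪ symmDiff A {ω | restrictSeed (k-1) ω ∈ B (k-1)} := by
    intro ω hω
    obtain ⟨h1, h2⟩ := hω
    have h2' : restrictSeed (k-1) ω ∉ B (k-1) := by
      have he : (fun j : Fin (k-1) => restrictSeed k ω (Fin.castLE (Nat.sub_le k 1) j))
          = restrictSeed (k-1) ω := by
        funext j
        simp [restrictSeed]
      rwa [he] at h2
    by_cases hA' : ω ∈ A
    · right
      rw [Set.mem_symmDiff]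
      exact Or.inl ⟨hA', h2'⟩
    · left
      rw [Set.mem_symmDiff]
      exact Or.inr ⟨h1, hA'⟩
  have hk1 : k - 1 ≥ k₀ := by omega
  have hmeasb : P lam {ω | restrictSeed k ω ∈ S}
      ≤ ENNReal.ofReal (C * Real.exp (-c*k) + C * Real.exp (-c*((k:ℝ)-1))) := by
    calc P lam {ω | restrictSeed k ω ∈ S}
        ≤ P lam (symmDiff A {ω | restrictSeed k ω ∈ B k}
            ∪ symmDiff A {ω | restrictSeed (k-1) ω ∈ B (k-1)}) := measure_mono hincl
      _ ≤ P lam (symmDiff A {ω | restrictSeed k ω ∈ B k})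
          + P lam (symmDiff A {ω | restrictSeed (k-1) ω ∈ B (k-1)}) := measure_union_le _ _
      _ ≤ ENNReal.ofReal (C * Real.exp (-c*k)) + ENNReal.ofReal (C * Real.exp (-c*(k-1:ℕ))) :=
          add_le_add (hb k (by omega)) (hb (k-1) hk1)
      _ = ENNReal.ofReal (C * Real.exp (-c*k) + C * Real.exp (-c*((k:ℝ)-1))) := by
          rw [← ENNReal.ofReal_add (by positivity) (by positivity)]
          congr 3
          push_cast [Nat.cast_sub (by omega : 1 ≤ k)]
          ring
  -- weights
  set pl : ℕ → ℝ≥0∞ := fun n => ENNReal.ofReal (poissonPMFReal lam.toNNReal n) with hpl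
  set ps : ℕ → ℝ≥0∞ := fun n => ENNReal.ofReal (poissonPMFReal (r^2/lam).toNNReal n) with hps
  set p : (Fin k → ℕ) → ℝ≥0∞ := fun m => ∏ i : Fin k, pl (m i) with hpdef
  set q : (Fin k → ℕ) → ℝ≥0∞ := fun m => ∏ i : Fin k, ps (m i) with hqdef
  have hcyl : P lam {ω | restrictSeed k ω ∈ S} = ∑' m, S.indicator p m :=
    cyl_measure k (P lam) lam.toNNReal ((hP lam hlam).2 k) S
  -- the termwise identity
  have habs : ∀ m : Fin k → ℕ,
      ‖∏ i : Fin k, Complex.exp (-z) * z ^ (m i) / ((m i).factorial : ℂ)‖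
        = ∏ i : Fin k, (Real.exp (-x) * r ^ (m i) / ((m i).factorial : ℝ)) := by
    intro m
    rw [norm_prod]
    refine Finset.prod_congr rfl (fun i _ => ?_)
    rw [norm_div, norm_mul, norm_pow, Complex.norm_exp]
    simp [Complex.neg_re, hxdef, hrdef]
  have hterm : ∀ m : Fin k → ℕ,
      ENNReal.ofReal (∏ i : Fin k, (Real.exp (-x) * r ^ (m i) / ((m i).factorial : ℝ)))
        = ENNReal.ofReal (Real.exp β) ^ k * ((p m) ^ (1/2:ℝ) * (q m) ^ (1/2:ℝ)) := by
    intro m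
    have h1 : (∏ i : Fin k, (Real.exp (-x) * r ^ (m i) / ((m i).factorial : ℝ)))
        = Real.exp β ^ k * ∏ i : Fin k,
            (Real.sqrt (poissonPMFReal lam.toNNReal (m i))
              * Real.sqrt (poissonPMFReal (r^2/lam).toNNReal (m i))) := by
      rw [Finset.prod_congr rfl (fun i _ => coord_id hlam hr0 (m i)),
        Finset.prod_mul_distrib, Finset.prod_const, Finset.card_univ, Fintype.card_fin]
    rw [h1, ENNReal.ofReal_mul (by positivity), ENNReal.ofReal_pow (Real.exp_nonneg _)]
    congr 1
    rw [ENNReal.ofReal_prod_of_nonneg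
      (fun i _ => mul_nonneg (Real.sqrt_nonneg _) (Real.sqrt_nonneg _))]
    have h2 : ∀ i : Fin k,
        ENNReal.ofReal (Real.sqrt (poissonPMFReal lam.toNNReal (m i))
          * Real.sqrt (poissonPMFReal (r^2/lam).toNNReal (m i)))
        = (pl (m i)) ^ (1/2:ℝ) * (ps (m i)) ^ (1/2:ℝ) := by
      intro i
      rw [ENNReal.ofReal_mul (Real.sqrt_nonneg _), hpl, hps,
        ENNReal.ofReal_rpow_of_nonneg poissonPMFReal_nonneg (by norm_num : (0:ℝ) ≤ 1/2),
        ENNReal.ofReal_rpow_of_nonneg poissonPMFReal_nonneg (by norm_num : (0:ℝ) ≤ 1/2),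
        ← Real.sqrt_eq_rpow, ← Real.sqrt_eq_rpow]
    rw [Finset.prod_congr rfl (fun i _ => h2 i), Finset.prod_mul_distrib,
      hpdef, hqdef, ← ENNReal.prod_rpow_of_nonneg (by norm_num : (0:ℝ) ≤ 1/2),
      ← ENNReal.prod_rpow_of_nonneg (by norm_num : (0:ℝ) ≤ 1/2)]
  -- sum of second weight is one
  have hqsum : ∑' m : Fin k → ℕ, q m = 1 := by
    rw [hqdef]
    rw [tsum_pi_prod k ps, hps, pmf_tsum_one, one_pow]
  -- main chain in ℝ≥0∞
  rw [← ENNReal.ofReal_le_ofReal_iff (by positivity)]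
  have step1 : ENNReal.ofReal ‖g k z‖
      ≤ ∑' m, S.indicator (fun m =>
          ENNReal.ofReal (Real.exp β) ^ k * ((p m) ^ (1/2:ℝ) * (q m) ^ (1/2:ℝ))) m := by
    rw [hg k z]
    refine le_trans (ofReal_abs_tsum _) ?_
    have := tsum_subtype S (fun m =>
      ENNReal.ofReal (Real.exp β) ^ k * ((p m) ^ (1/2:ℝ) * (q m) ^ (1/2:ℝ)))
    rw [← this]
    apply le_of_eq
    apply tsum_congr
    intro m
    rw [habs m.1, hterm m.1]
  have step2 : ∑' m, S.indicator (fun m =>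
        ENNReal.ofReal (Real.exp β) ^ k * ((p m) ^ (1/2:ℝ) * (q m) ^ (1/2:ℝ))) m
      ≤ ENNReal.ofReal (Real.exp β) ^ k
          * ((∑' m, S.indicator p m) ^ (1/2:ℝ) * (∑' m, q m) ^ (1/2:ℝ)) := by
    have hpt : ∀ m, S.indicator (fun m =>
          ENNReal.ofReal (Real.exp β) ^ k * ((p m) ^ (1/2:ℝ) * (q m) ^ (1/2:ℝ))) m
        ≤ ENNReal.ofReal (Real.exp β) ^ k
            * ((S.indicator p m) ^ (1/2:ℝ) * (q m) ^ (1/2:ℝ)) := by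
      intro m
      by_cases hm : m ∈ S
      · rw [Set.indicator_of_mem hm, Set.indicator_of_mem hm]
      · rw [Set.indicator_of_notMem hm, Set.indicator_of_notMem hm]
        simp
    calc ∑' m, S.indicator (fun m =>
          ENNReal.ofReal (Real.exp β) ^ k * ((p m) ^ (1/2:ℝ) * (q m) ^ (1/2:ℝ))) m
        ≤ ∑' m, ENNReal.ofReal (Real.exp β) ^ k
            * ((S.indicator p m) ^ (1/2:ℝ) * (q m) ^ (1/2:ℝ)) := Summable.tsum_le_tsum hpt
            ENNReal.summable ENNReal.summable
      _ = ENNReal.ofReal (Real.exp β) ^ k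
            * ∑' m, (S.indicator p m) ^ (1/2:ℝ) * (q m) ^ (1/2:ℝ) := ENNReal.tsum_mul_left
      _ ≤ ENNReal.ofReal (Real.exp β) ^ k
            * ((∑' m, S.indicator p m) ^ (1/2:ℝ) * (∑' m, q m) ^ (1/2:ℝ)) := by
          exact mul_le_mul_right (tsum_cs (S.indicator p) q) _
  have step3 : ENNReal.ofReal (Real.exp β) ^ k
        * ((∑' m, S.indicator p m) ^ (1/2:ℝ) * (∑' m, q m) ^ (1/2:ℝ))
      ≤ ENNReal.ofReal (Real.exp β ^ k * Real.sqrt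
          (C * Real.exp (-c*k) + C * Real.exp (-c*((k:ℝ)-1)))) := by
    rw [hqsum, ENNReal.one_rpow, mul_one]
    rw [← hcyl]
    set w := C * Real.exp (-c*k) + C * Real.exp (-c*((k:ℝ)-1)) with hwdef
    have hw0 : 0 ≤ w := by positivity
    calc ENNReal.ofReal (Real.exp β) ^ k * (P lam {ω | restrictSeed k ω ∈ S}) ^ (1/2:ℝ)
        ≤ ENNReal.ofReal (Real.exp β) ^ k * (ENNReal.ofReal w) ^ (1/2:ℝ) :=
          mul_le_mul_right (ENNReal.rpow_le_rpow hmeasb (by norm_num)) _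
      _ = ENNReal.ofReal (Real.exp β ^ k * Real.sqrt w) := by
          rw [ENNReal.ofReal_rpow_of_nonneg hw0 (by norm_num : (0:ℝ) ≤ 1/2),
            ← Real.sqrt_eq_rpow, ← ENNReal.ofReal_pow (Real.exp_nonneg _),
            ← ENNReal.ofReal_mul (by positivity)]
  refine le_trans step1 (le_trans step2 (le_trans step3 (ENNReal.ofReal_le_ofReal ?_)))
  -- final real estimate
  have hsqexp : ∀ t : ℝ, Real.sqrt (Real.exp t) = Real.exp (t/2) := by
    intro t
    rw [show Real.exp t = (Real.exp (t/2))^2 by rw [sq, ← Real.exp_add]; ring_nf,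
      Real.sqrt_sq (Real.exp_nonneg _)]
  have hw : C * Real.exp (-c*k) + C * Real.exp (-c*((k:ℝ)-1))
      ≤ 2*C*Real.exp c * Real.exp (-c*k) := by
    have h1 : Real.exp (-c*((k:ℝ)-1)) = Real.exp c * Real.exp (-c*k) := by
      rw [← Real.exp_add]; ring_nf
    have h2 : (1:ℝ) ≤ Real.exp c := Real.one_le_exp hc.le
    rw [h1]
    nlinarith [mul_nonneg (mul_nonneg hC.le (Real.exp_pos (-c*(k:ℝ))).le)
      (sub_nonneg.mpr h2)]
  have hsw : Real.sqrt (C * Real.exp (-c*k) + C * Real.exp (-c*((k:ℝ)-1)))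
      ≤ Real.sqrt (2*C*Real.exp c) * Real.exp (-(c/2)*k) := by
    calc Real.sqrt (C * Real.exp (-c*k) + C * Real.exp (-c*((k:ℝ)-1)))
        ≤ Real.sqrt (2*C*Real.exp c * Real.exp (-c*k)) := Real.sqrt_le_sqrt hw
      _ = Real.sqrt (2*C*Real.exp c) * Real.sqrt (Real.exp (-c*k)) :=
          Real.sqrt_mul (by positivity) _
      _ = Real.sqrt (2*C*Real.exp c) * Real.exp (-(c/2)*k) := by
          rw [hsqexp]; ring_nf
  have hexpk : Real.exp β ^ k = Real.exp ((k:ℝ) * β) := by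
    rw [Real.exp_nat_mul]
  calc Real.exp β ^ k * Real.sqrt (C * Real.exp (-c*k) + C * Real.exp (-c*((k:ℝ)-1)))
      ≤ Real.exp ((k:ℝ) * β) * (Real.sqrt (2*C*Real.exp c) * Real.exp (-(c/2)*k)) := by
        rw [hexpk]
        exact mul_le_mul_of_nonneg_left hsw (Real.exp_nonneg _)
    _ = Real.sqrt (2*C*Real.exp c) * (Real.exp ((k:ℝ)*β) * Real.exp (-(c/2)*k)) := by ring
    _ ≤ Real.sqrt (2*C*Real.exp c) * Real.exp (-(3*c/8)*k) := by
        refine mul_le_mul_of_nonneg_left ?_ (Real.sqrt_nonneg _)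
        rw [← Real.exp_add]
        apply Real.exp_le_exp.mpr
        have hk0 : (0:ℝ) ≤ (k:ℝ) := Nat.cast_nonneg k
        nlinarith [mul_le_mul_of_nonneg_left hβ hk0]
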